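/- If M is the cokernel of a WI^n_k(R)-preenvelope X → F of a left R-module X with F flat, then Tor^R_1(A, M) = 0 for every right R-module A of n-weak flat dimension at most k. -/

import Mathlib

/-!
Common definitions for formalizing "(n,k)-weak cotorsion modules" over an arbitrary
(not necessarily commutative) ring `R`.  Left `R`-modules are objects of
`ModuleCat R`, right `R`-modules are objects of `ModuleCat Rᵐᵒᵖ`.

Since Mathlib does not provide `Tor` of a right module with a left module over a
noncommutative ring, we encode the vanishing of `Tor_i^R(N, M)` (for `N` a right
module and `M` a left module) by the equivalent condition
`Ext^i_{Rᵐᵒᵖ}(N, M⋆) = 0`, where `M⋆ = Hom_ℤ(M, ℚ/ℤ)` is the character module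
(a right module).  This is equivalent because `ℚ/ℤ` is an injective cogenerator:
`Ext^i_{Rᵐᵒᵖ}(N, M⋆) ≅ (Tor_i^R(N, M))⋆`, and an abelian group vanishes iff its
character group does.
-/

open CategoryTheory

universe u

noncomputable section

/-- The character group `Hom_ℤ(N, ℚ/ℤ)`. -/
def CharGroup (N : Type u) [AddCommGroup N] : Type u := N →+ AddCircle (1 : ℚ)

instance (N : Type u) [AddCommGroup N] : AddCommGroup (CharGroup N) :=
  inferInstanceAs (AddCommGroup (N →+ AddCircle (1 : ℚ)))

namespace CharGroup

variable {N : Type u} [AddCommGroup N]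

/-- View an element of the character group as an additive monoid hom. -/
def toHom (f : CharGroup N) : N →+ AddCircle (1 : ℚ) := f

/-- Build an element of the character group from an additive monoid hom. -/
def ofHom (f : N →+ AddCircle (1 : ℚ)) : CharGroup N := f

theorem hom_ext {f g : CharGroup N} (h : ∀ m, toHom f m = toHom g m) : f = g :=
  AddMonoidHom.ext h

end CharGroup

open CharGroup in
/-- Left module structure on the character group of a right module. -/
instance charGroupModuleLeft (R : Type u) [Ring R] (N : Type u) [AddCommGroup N]
    [Module Rᵐᵒᵖ N] : Module R (CharGroup N) where
  smul r f := ofHom ((toHom f).comp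
    (AddMonoidHom.mk' (fun m => MulOpposite.op r • m) (fun a b => smul_add _ a b)))
  one_smul f := hom_ext fun m => by
    show toHom f (MulOpposite.op (1 : R) • m) = toHom f m
    rw [MulOpposite.op_one, one_smul]
  mul_smul r s f := hom_ext fun m => by
    show toHom f (MulOpposite.op (r * s) • m)
      = toHom f (MulOpposite.op s • MulOpposite.op r • m)
    rw [MulOpposite.op_mul, mul_smul]
  smul_zero r := CharGroup.hom_ext fun m => rfl
  smul_add r f g := CharGroup.hom_ext fun m => rfl
  add_smul r s f := hom_ext fun m => by
    show toHom f (MulOpposite.op (r + s) • m)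
      = toHom f (MulOpposite.op r • m) + toHom f (MulOpposite.op s • m)
    rw [MulOpposite.op_add, add_smul, map_add]
  zero_smul f := hom_ext fun m => by
    show toHom f (MulOpposite.op (0 : R) • m) = 0
    rw [MulOpposite.op_zero, zero_smul, map_zero]

open CharGroup in
/-- Right module structure on the character group of a left module. -/
instance charGroupModuleRight (R : Type u) [Ring R] (N : Type u) [AddCommGroup N]
    [Module R N] : Module Rᵐᵒᵖ (CharGroup N) where
  smul r f := ofHom ((toHom f).comp
    (AddMonoidHom.mk' (fun m => r.unop • m) (fun a b => smul_add _ a b)))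
  one_smul f := hom_ext fun m => by
    show toHom f ((1 : Rᵐᵒᵖ).unop • m) = toHom f m
    rw [MulOpposite.unop_one, one_smul]
  mul_smul r s f := hom_ext fun m => by
    show toHom f ((r * s).unop • m) = toHom f (s.unop • r.unop • m)
    rw [MulOpposite.unop_mul, mul_smul]
  smul_zero r := CharGroup.hom_ext fun m => rfl
  smul_add r f g := CharGroup.hom_ext fun m => rfl
  add_smul r s f := hom_ext fun m => by
    show toHom f ((r + s).unop • m) = toHom f (r.unop • m) + toHom f (s.unop • m)
    rw [MulOpposite.unop_add, add_smul, map_add]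
  zero_smul f := hom_ext fun m => by
    show toHom f ((0 : Rᵐᵒᵖ).unop • m) = 0
    rw [MulOpposite.unop_zero, zero_smul, map_zero]

variable (R : Type u) [Ring R]

/-- `extVanish S i A B` says that `Ext^i_S(A, B) = 0`. -/
def extVanish (S : Type u) [Ring S] (i : ℕ) (A B : ModuleCat.{u} S) : Prop :=
  Subsingleton (((Ext ℤ (ModuleCat.{u} S) i).obj (Opposite.op A)).obj B)

/-- The character module of a right `R`-module, as a left `R`-module. -/
def charLeft (N : ModuleCat.{u} Rᵐᵒᵖ) : ModuleCat.{u} R :=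
  ModuleCat.of R (CharGroup N)

/-- The character module of a left `R`-module, as a right `R`-module. -/
def charRight (M : ModuleCat.{u} R) : ModuleCat.{u} Rᵐᵒᵖ :=
  ModuleCat.of Rᵐᵒᵖ (CharGroup M)

/-- `torVanish R i N M` encodes `Tor_i^R(N, M) = 0` for a right module `N` and a
left module `M`, via the character module duality
`Ext^i_R(M, N⋆) ≅ (Tor_i^R(N, M))⋆`. -/
def torVanish (i : ℕ) (N : ModuleCat.{u} Rᵐᵒᵖ) (M : ModuleCat.{u} R) : Prop :=
  extVanish R i M (charLeft R N)

/-- `K` is a special super finitely presented `S`-module (for the parameter `n`):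
`K` is the image of `F_n → F_{n-1}` in a projective resolution
`⋯ → F_{n+1} → F_n → ⋯ → F_0 → U → 0` of some module `U` in which `F_i` is finitely
generated projective for all `i ≥ n`.  (For `n = 0` the distinguished module is `U`
itself, matching `Ext^{n+1}(U, -) ≅ Ext^1(K_{n-1}, -)`.) -/
def IsSpecialSFP (S : Type u) [Ring S] (n : ℕ) (K : ModuleCat.{u} S) : Prop :=
  ∃ (U : ModuleCat.{u} S) (F : ℕ → ModuleCat.{u} S)
    (d : ∀ i, F (i + 1) →ₗ[S] F i) (π : F 0 →ₗ[S] U),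
      (∀ i, Module.Projective S (F i)) ∧
      (∀ i, n ≤ i → Module.Finite S (F i)) ∧
      Function.Surjective π ∧ Function.Exact (d 0) π ∧
      (∀ i, Function.Exact (d (i + 1)) (d i)) ∧
      (if n = 0 then Nonempty ((K : Type u) ≃ₗ[S] U)
       else Nonempty ((K : Type u) ≃ₗ[S] LinearMap.range (d (n - 1))))

/-- The `n`-weak injective dimension of a left `S`-module `M` is at most `k`. -/
def nwidLE (S : Type u) [Ring S] (n k : ℕ) (M : ModuleCat.{u} S) : Prop :=
  ∀ K : ModuleCat.{u} S, IsSpecialSFP S n K → extVanish S (k + 1) K M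

/-- The `n`-weak flat dimension of a right `R`-module `N` is at most `k`:
`Tor_{k+1}^R(N, K) = 0` for every special super finitely presented left module `K`. -/
def nwfdLE (n k : ℕ) (N : ModuleCat.{u} Rᵐᵒᵖ) : Prop :=
  ∀ K : ModuleCat.{u} R, IsSpecialSFP R n K → torVanish R (k + 1) N K

/-- A right `R`-module `M` is `(n,k)`-weak cotorsion if `Ext^1(N, M) = 0` for every
right module `N` of `n`-weak flat dimension at most `k`. -/
def IsNKWeakCotorsion (n k : ℕ) (M : ModuleCat.{u} Rᵐᵒᵖ) : Prop :=
  ∀ N : ModuleCat.{u} Rᵐᵒᵖ, nwfdLE R n k N → extVanish Rᵐᵒᵖ 1 N M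

/-- Projective dimension at most `k`, via Ext vanishing. -/
def pdLE (S : Type u) [Ring S] (k : ℕ) (K : ModuleCat.{u} S) : Prop :=
  ∀ M : ModuleCat.{u} S, extVanish S (k + 1) K M

/-- Injective dimension at most `k`, via Ext vanishing. -/
def idLE (S : Type u) [Ring S] (k : ℕ) (M : ModuleCat.{u} S) : Prop :=
  ∀ N : ModuleCat.{u} S, extVanish S (k + 1) N M

/-- Flat dimension of a right module at most `k`, via Tor vanishing. -/
def fdLE (k : ℕ) (N : ModuleCat.{u} Rᵐᵒᵖ) : Prop :=
  ∀ A : ModuleCat.{u} R, torVanish R (k + 1) N A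

/-- `l.n.sp.gldim(R) ≤ k` : every special super finitely presented left module has
projective dimension at most `k`. -/
def lnspGldimLE (n k : ℕ) : Prop :=
  ∀ K : ModuleCat.{u} R, IsSpecialSFP R n K → pdLE R k K

/-- `w.gl.dim(R) ≤ k`. -/
def wGldimLE (k : ℕ) : Prop :=
  ∀ N : ModuleCat.{u} Rᵐᵒᵖ, fdLE R k N

/-- A right `R`-module `M` is `k`-cotorsion if `Ext^1(F, M) = 0` for every right
module `F` of flat dimension at most `k`. -/
def IsKCotorsion (k : ℕ) (M : ModuleCat.{u} Rᵐᵒᵖ) : Prop :=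
  ∀ F : ModuleCat.{u} Rᵐᵒᵖ, fdLE R k F → extVanish Rᵐᵒᵖ 1 F M

/-- `φ : E → D` is a `𝒞`-precover of `D`. -/
def IsPrecover (S : Type u) [Ring S] (𝒞 : ModuleCat.{u} S → Prop)
    (E D : ModuleCat.{u} S) (φ : E →ₗ[S] D) : Prop :=
  𝒞 E ∧ ∀ F : ModuleCat.{u} S, 𝒞 F → ∀ g : F →ₗ[S] D, ∃ h : F →ₗ[S] E, φ ∘ₗ h = g

/-- `φ : E → D` is a `𝒞`-cover of `D`. -/
def IsCover (S : Type u) [Ring S] (𝒞 : ModuleCat.{u} S → Prop)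
    (E D : ModuleCat.{u} S) (φ : E →ₗ[S] D) : Prop :=
  IsPrecover S 𝒞 E D φ ∧ ∀ g : E →ₗ[S] E, φ ∘ₗ g = φ → Function.Bijective g

/-- `f : X → F` is a `𝒞`-preenvelope of `X`. -/
def IsPreenvelope (S : Type u) [Ring S] (𝒞 : ModuleCat.{u} S → Prop)
    (X F : ModuleCat.{u} S) (f : X →ₗ[S] F) : Prop :=
  𝒞 F ∧ ∀ F' : ModuleCat.{u} S, 𝒞 F' → ∀ g : X →ₗ[S] F', ∃ h : F →ₗ[S] F', h ∘ₗ f = g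

/-- A module is reduced if it has no nonzero injective submodules. -/
def IsReducedModule (S : Type u) [Ring S] (M : ModuleCat.{u} S) : Prop :=
  ∀ N : Submodule S M, Module.Injective S N → N = ⊥

/-- `D` is an `m`-th cosyzygy of `M`: there is an exact sequence
`0 → M → E^0 → ⋯ → E^{m-1} → D → 0` with each `E^i` injective. -/
def IsCosyzygy (S : Type u) [Ring S] : ℕ → ModuleCat.{u} S → ModuleCat.{u} S → Prop
  | 0, M, D => Nonempty ((M : Type u) ≃ₗ[S] D)
  | m + 1, M, D => ∃ (C E : ModuleCat.{u} S), IsCosyzygy S m M C ∧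
      Module.Injective S E ∧
      ∃ (ι : C →ₗ[S] E) (p : E →ₗ[S] D),
        Function.Injective ι ∧ Function.Surjective p ∧ Function.Exact ι p


/-- A left `R`-module `F` is flat: `Tor_1(A, F) = 0` for every right module `A`
(encoded via character duality, as above). -/
def IsFlatModule (R : Type u) [Ring R] (F : ModuleCat.{u} R) : Prop :=
  ∀ A : ModuleCat.{u} Rᵐᵒᵖ, torVanish R 1 A F

end

noncomputable section
namespace Stmt7Aux

lemma factor_surj {R : Type u} [Ring R] {A B C : Type u}
    [AddCommGroup A] [AddCommGroup B] [AddCommGroup C]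
    [Module R A] [Module R B] [Module R C]
    (q : A →ₗ[R] B) (t : A →ₗ[R] C) (hq : Function.Surjective q)
    (h : LinearMap.ker q ≤ LinearMap.ker t) : ∃ s : B →ₗ[R] C, s ∘ₗ q = t := by
  let e := q.quotKerEquivOfSurjective hq
  refine ⟨(LinearMap.ker q).liftQ t h ∘ₗ (e.symm : B →ₗ[R] A ⧸ LinearMap.ker q), ?_⟩
  ext a
  have h1 : e.symm (q a) = Submodule.Quotient.mk a := by
    apply e.injective
    rw [LinearEquiv.apply_symm_apply]
    rfl
  simp [h1]

end Stmt7Aux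

namespace Stmt7Aux
open Stmt7Aux

lemma subsingleton_of_isZero {S : Type} [Ring S] {X : ModuleCat.{u} S}
    (h : Limits.IsZero X) : Subsingleton X := by
  constructor
  intro a b
  have : (𝟙 X : X ⟶ X) = 0 := h.eq_of_src _ _
  calc a = (𝟙 X : X ⟶ X) a := rfl
    _ = (0 : X ⟶ X) a := by rw [this]
    _ = (𝟙 X : X ⟶ X) b := by rw [this]; rfl
    _ = b := rfl

lemma extVanish_one_iff {S : Type u} [Ring S] (M J : ModuleCat.{u} S)
    (P : ProjectiveResolution M) :
    extVanish S 1 M J ↔ ∀ φ : P.complex.X 1 ⟶ J, P.complex.d 2 1 ≫ φ = 0 →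
      ∃ ψ : P.complex.X 0 ⟶ J, P.complex.d 1 0 ≫ ψ = φ := by
  have e := P.isoExt (R := ℤ) 1 J
  have hEx : extVanish S 1 M J ↔ ((P.complex.linearYonedaObj ℤ J).sc' 0 1 2).Exact := by
    rw [← HomologicalComplex.exactAt_iff' _ 0 1 2 (by simp) (by simp),
      HomologicalComplex.exactAt_iff_isZero_homology]
    constructor
    · intro h
      have : Subsingleton (((Ext ℤ (ModuleCat.{u} S) 1).obj (Opposite.op M)).obj J) := h
      exact (ModuleCat.isZero_of_subsingleton _).of_iso e.symm
    · intro h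
      exact subsingleton_of_isZero (h.of_iso e)
  rw [hEx, ShortComplex.moduleCat_exact_iff]
  constructor
  · intro h φ hφ
    obtain ⟨ψ, hψ⟩ := h φ hφ
    exact ⟨ψ, hψ⟩
  · intro h φ hφ
    obtain ⟨ψ, hψ⟩ := h φ hφ
    exact ⟨ψ, hψ⟩

/-- From `Ext^1(F,J)=0`, maps from the first syzygy of `F` (w.r.t. a chosen
projective resolution) into `J` extend to the degree-0 part. -/
lemma extend_of_extVanish {S : Type u} [Ring S] {F J : ModuleCat.{u} S}
    (P : ProjectiveResolution F) (h : extVanish S 1 F J)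
    (lam : ↥(LinearMap.ker ((P.π.f 0).hom : P.complex.X 0 →ₗ[S] F)) →ₗ[S] J) :
    ∃ Λ : P.complex.X 0 →ₗ[S] J,
      Λ ∘ₗ (LinearMap.ker ((P.π.f 0).hom : P.complex.X 0 →ₗ[S] F)).subtype = lam := by
  rw [extVanish_one_iff F J P] at h
  have hd : ∀ y, ((P.π.f 0).hom : P.complex.X 0 →ₗ[S] F) (P.complex.d 1 0 y) = 0 := by
    intro y
    exact congrFun (congrArg (fun (f : P.complex.X 1 ⟶ F) => (f : _ → _))
      P.complex_d_comp_π_f_zero) y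
  let d10' : P.complex.X 1 →ₗ[S] LinearMap.ker ((P.π.f 0).hom : P.complex.X 0 →ₗ[S] F) :=
    LinearMap.codRestrict _ (P.complex.d 1 0).hom hd
  have hside : P.complex.d 2 1 ≫ ModuleCat.ofHom (lam ∘ₗ d10' :
      P.complex.X 1 →ₗ[S] J) = 0 := by
    ext x
    have h0 : P.complex.d 1 0 (P.complex.d 2 1 x) = 0 :=
      congrFun (congrArg (fun (f : P.complex.X 2 ⟶ P.complex.X 0) => (f : _ → _))
        (P.complex.d_comp_d 2 1 0)) x
    have hz : d10' (P.complex.d 2 1 x) = 0 := Subtype.ext h0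
    change lam (d10' (P.complex.d 2 1 x)) = 0
    rw [hz, map_zero]
  obtain ⟨ψ, hψ⟩ := h (ModuleCat.ofHom (lam ∘ₗ d10')) hside
  refine ⟨ψ.hom, ?_⟩
  ext z
  obtain ⟨y, hy⟩ := (ShortComplex.moduleCat_exact_iff _).1 P.exact₀ z.1 z.2
  have h1 : ψ (P.complex.d 1 0 y) = lam (d10' y) :=
    congrFun (congrArg (fun (f : P.complex.X 1 ⟶ J) => (f : _ → _)) hψ) y
  have h2 : d10' y = z := Subtype.ext hy
  rw [h2] at h1
  rw [hy] at h1
  exact h1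

end Stmt7Aux

namespace Stmt7Aux

lemma split_of_extVanish {S : Type u} [Ring S] {F J : ModuleCat.{u} S}
    (hFJ : extVanish S 1 F J)
    (Z : Type u) [AddCommGroup Z] [Module S Z]
    (ι : ↥J →ₗ[S] Z) (p : Z →ₗ[S] ↥F) (hι : Function.Injective ι)
    (hp : Function.Surjective p)
    (hker : ∀ z, p z = 0 ↔ z ∈ LinearMap.range ι) :
    ∃ s : ↥F →ₗ[S] Z, p ∘ₗ s = LinearMap.id := by
  obtain ⟨P⟩ : Nonempty (ProjectiveResolution F) := ⟨ProjectiveResolution.of F⟩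
  haveI : Module.Projective S (P.complex.X 0) :=
    (IsProjective.iff_projective _).2 (P.projective 0)
  set π0 : P.complex.X 0 →ₗ[S] F := ((P.π.f 0).hom : P.complex.X 0 →ₗ[S] F)
  have hπ0 : Function.Surjective π0 :=
    (ModuleCat.epi_iff_surjective (P.π.f 0)).1 inferInstance
  obtain ⟨τ, hτ⟩ := Module.projective_lifting_property p π0 hp
  let e : ↥J ≃ₗ[S] LinearMap.range ι := LinearEquiv.ofInjective ι hι
  have hmem : ∀ x : LinearMap.ker π0, (τ ∘ₗ (LinearMap.ker π0).subtype) x ∈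
      LinearMap.range ι := by
    intro x
    refine (hker _).1 ?_
    have h3 := LinearMap.congr_fun hτ x.1
    simp only [LinearMap.comp_apply] at h3 ⊢
    rw [Submodule.subtype_apply, h3, LinearMap.mem_ker.mp x.2]
  let lam : ↥(LinearMap.ker π0) →ₗ[S] ↥J :=
    (e.symm : LinearMap.range ι →ₗ[S] ↥J) ∘ₗ
      LinearMap.codRestrict _ (τ ∘ₗ (LinearMap.ker π0).subtype) hmem
  obtain ⟨Λ, hΛ⟩ := extend_of_extVanish P hFJ lam
  have hιe : ∀ w : LinearMap.range ι, ι (e.symm w) = w.1 := by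
    intro w
    have := e.apply_symm_apply w
    calc ι (e.symm w) = (e (e.symm w)).1 := rfl
      _ = w.1 := by rw [this]
  have hkert : LinearMap.ker π0 ≤ LinearMap.ker (τ - ι ∘ₗ Λ) := by
    intro x hx
    have hΛx : Λ x = lam ⟨x, hx⟩ := LinearMap.congr_fun hΛ ⟨x, hx⟩
    have : ι (lam ⟨x, hx⟩) = τ x := hιe _
    simp only [LinearMap.mem_ker, LinearMap.sub_apply, LinearMap.comp_apply, hΛx, this,
      sub_self]
  obtain ⟨s, hs⟩ := factor_surj π0 (τ - ι ∘ₗ Λ) hπ0 hkert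
  refine ⟨s, ?_⟩
  have hpι : ∀ j, p (ι j) = 0 := fun j => (hker _).2 ⟨j, rfl⟩
  have : (p ∘ₗ s) ∘ₗ π0 = LinearMap.id ∘ₗ π0 := by
    rw [LinearMap.comp_assoc, hs]
    ext y
    have h3 := LinearMap.congr_fun hτ y
    simp only [LinearMap.comp_apply] at h3
    simp [hpι, h3]
  ext u
  obtain ⟨y, hy⟩ := hπ0 u
  have h4 := LinearMap.congr_fun this y
  simpa [hy] using h4

end Stmt7Aux

namespace Stmt7Aux

lemma main_chase {R : Type u} [Ring R] (X F M J : ModuleCat.{u} R)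
    (hFJ : extVanish R 1 F J) (f : ↥X →ₗ[R] ↥F)
    (hfact : ∀ v : ↥X →ₗ[R] ↥J, ∃ h : ↥F →ₗ[R] ↥J, h ∘ₗ f = v)
    (g : ↥F →ₗ[R] ↥M) (hg : Function.Surjective g) (hfg : Function.Exact f g) :
    extVanish R 1 M J := by
  obtain ⟨P⟩ : Nonempty (ProjectiveResolution M) := ⟨ProjectiveResolution.of M⟩
  rw [extVanish_one_iff M J P]
  intro φ hφ
  set π0 : P.complex.X 0 →ₗ[R] M := ((P.π.f 0).hom : P.complex.X 0 →ₗ[R] M) with hπ0def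
  have hd : ∀ y, π0 (P.complex.d 1 0 y) = 0 := fun y =>
    congrFun (congrArg (fun (q : P.complex.X 1 ⟶ M) => (q : _ → _))
      P.complex_d_comp_π_f_zero) y
  set K : Submodule R (P.complex.X 0) := LinearMap.ker π0 with hKdef
  let d10' : P.complex.X 1 →ₗ[R] K :=
    LinearMap.codRestrict _ (P.complex.d 1 0).hom hd
  have hd10'surj : Function.Surjective d10' := by
    rintro ⟨z, hz⟩
    obtain ⟨y, hy⟩ := (ShortComplex.moduleCat_exact_iff _).1 P.exact₀ z hz
    exact ⟨y, Subtype.ext hy⟩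
  have hd10'ker : LinearMap.ker d10' ≤ LinearMap.ker φ.hom := by
    intro x hx
    have hx0 : P.complex.d 1 0 x = 0 := congrArg Subtype.val (LinearMap.mem_ker.mp hx)
    obtain ⟨w, hw⟩ := (ShortComplex.moduleCat_exact_iff _).1 (P.exact_succ 0) x hx0
    have : φ (P.complex.d 2 1 w) = 0 :=
      congrFun (congrArg (fun (q : P.complex.X 2 ⟶ J) => (q : _ → _)) hφ) w
    rw [LinearMap.mem_ker, ← hw]
    exact this
  obtain ⟨ψ₀, hψ₀⟩ := factor_surj d10' φ.hom hd10'surj hd10'ker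
  -- the pushout of `K → P₀` along `ψ₀`
  let W : Submodule R (↥(P.complex.X 0) × ↥J) :=
    LinearMap.range (LinearMap.prod K.subtype (-ψ₀))
  let Yq := (↥(P.complex.X 0) × ↥J) ⧸ W
  let mk : (↥(P.complex.X 0) × ↥J) →ₗ[R] Yq := W.mkQ
  let ιY : ↥J →ₗ[R] Yq := mk ∘ₗ LinearMap.inr R _ _
  have hWle : W ≤ LinearMap.ker (π0 ∘ₗ LinearMap.fst R (↥(P.complex.X 0)) ↥J) := by
    rintro _ ⟨k, rfl⟩
    simp only [LinearMap.mem_ker, LinearMap.comp_apply, LinearMap.prod_apply,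
      LinearMap.fst_apply, Pi.prod, Submodule.subtype_apply]
    exact k.2
  let pr : Yq →ₗ[R] ↥M := W.liftQ (π0 ∘ₗ LinearMap.fst R _ _) hWle
  have hpr_mk : ∀ a, pr (mk a) = π0 a.1 := fun a => rfl
  have hι_inj : Function.Injective ιY := by
    intro a b hab
    have : mk (0, a - b) = 0 := by
      have : ιY a - ιY b = 0 := by rw [hab, sub_self]
      rw [← this]
      simp only [ιY, mk, LinearMap.comp_apply, LinearMap.inr_apply, ← map_sub,
        Prod.mk_sub_mk, sub_zero]
    obtain ⟨k, hk⟩ := (Submodule.Quotient.mk_eq_zero W).1 this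
    have hk1 : (K.subtype) k = 0 := congrArg Prod.fst hk
    have hk0 : k = 0 := Subtype.ext hk1
    have hk2 : (-ψ₀) k = a - b := congrArg Prod.snd hk
    rw [hk0, map_zero] at hk2
    exact sub_eq_zero.mp hk2.symm
  have hpr_ι : ∀ j, pr (ιY j) = 0 := by
    intro j
    show pr (mk (0, j)) = 0
    rw [hpr_mk, map_zero]
  have hker_pr : ∀ y, pr y = 0 ↔ y ∈ LinearMap.range ιY := by
    intro y
    constructor
    · intro hy
      obtain ⟨a, rfl⟩ := Submodule.mkQ_surjective W y
      have ha : π0 a.1 = 0 := hy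
      refine ⟨a.2 + ψ₀ ⟨a.1, ha⟩, ?_⟩
      show mk (0, a.2 + ψ₀ ⟨a.1, ha⟩) = mk a
      refine (Submodule.Quotient.eq W).2 ?_
      refine ⟨-⟨a.1, ha⟩, ?_⟩
      have hk : (K.subtype.prod (-ψ₀)) ⟨a.1, ha⟩ = (a.1, -ψ₀ ⟨a.1, ha⟩) := rfl
      rw [map_neg, hk, Prod.ext_iff]
      constructor
      · show -a.1 = ((0, a.2 + ψ₀ ⟨a.1, ha⟩) - a).1
        rw [Prod.fst_sub]
        show -a.1 = 0 - a.1
        rw [zero_sub]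
      · show -(-ψ₀ ⟨a.1, ha⟩) = ((0, a.2 + ψ₀ ⟨a.1, ha⟩) - a).2
        rw [Prod.snd_sub, neg_neg]
        show ψ₀ ⟨a.1, ha⟩ = a.2 + ψ₀ ⟨a.1, ha⟩ - a.2
        abel
    · rintro ⟨j, rfl⟩
      exact hpr_ι j
  have hpr_surj : Function.Surjective pr := by
    intro m
    obtain ⟨x, hx⟩ := (ModuleCat.epi_iff_surjective (P.π.f 0)).1 inferInstance m
    exact ⟨mk (x, 0), by rw [hpr_mk]; exact hx⟩
  -- the pullback of `pr` along `g`
  let Zsub : Submodule R (Yq × ↥F) :=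
    LinearMap.ker (pr ∘ₗ LinearMap.fst R Yq ↥F - g ∘ₗ LinearMap.snd R Yq ↥F)
  have hZmem : ∀ z : Yq × ↥F, z ∈ Zsub ↔ pr z.1 = g z.2 := by
    intro z
    rw [LinearMap.mem_ker, LinearMap.sub_apply, LinearMap.comp_apply, LinearMap.comp_apply,
      LinearMap.fst_apply, LinearMap.snd_apply, sub_eq_zero]
  let p₂ : ↥Zsub →ₗ[R] ↥F := LinearMap.snd R Yq ↥F ∘ₗ Zsub.subtype
  have hιZmem : ∀ j : ↥J, ((ιY j, 0) : Yq × ↥F) ∈ Zsub := by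
    intro j
    rw [hZmem]
    show pr (ιY j) = g 0
    rw [hpr_ι, map_zero]
  let ιZ : ↥J →ₗ[R] ↥Zsub :=
    LinearMap.codRestrict Zsub (LinearMap.prod ιY 0) (fun j => hιZmem j)
  have hιZ_inj : Function.Injective ιZ := by
    intro a b hab
    exact hι_inj (congrArg (Prod.fst ∘ Subtype.val) hab)
  have hp₂_surj : Function.Surjective p₂ := by
    intro u
    obtain ⟨y, hy⟩ := hpr_surj (g u)
    exact ⟨⟨(y, u), (hZmem _).2 hy⟩, rfl⟩
  have hp₂_ker : ∀ z, p₂ z = 0 ↔ z ∈ LinearMap.range ιZ := by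
    intro z
    constructor
    · intro hz
      have hz2 : (z : Yq × ↥F).2 = 0 := hz
      have : pr (z : Yq × ↥F).1 = 0 := by
        rw [(hZmem _).1 z.2, hz2, map_zero]
      obtain ⟨j, hj⟩ := (hker_pr _).1 this
      refine ⟨j, ?_⟩
      apply Subtype.ext
      apply Prod.ext
      · exact hj
      · exact hz2.symm
    · rintro ⟨j, rfl⟩
      rfl
  obtain ⟨s, hs⟩ := split_of_extVanish hFJ (↥Zsub) ιZ p₂ hιZ_inj hp₂_surj hp₂_ker
  let s₁ : ↥F →ₗ[R] Yq := LinearMap.fst R Yq ↥F ∘ₗ Zsub.subtype ∘ₗ s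
  have hs₁ : ∀ u, pr (s₁ u) = g u := by
    intro u
    have h1 : pr ((s u : Yq × ↥F)).1 = g ((s u : Yq × ↥F)).2 := (hZmem _).1 (s u).2
    have h2 : ((s u : Yq × ↥F)).2 = u := LinearMap.congr_fun hs u
    rw [show s₁ u = ((s u : Yq × ↥F)).1 from rfl, h1, h2]
  -- correct `s₁` using the preenvelope property
  have hrange : ∀ x : ↥X, (s₁ ∘ₗ f) x ∈ LinearMap.range ιY := by
    intro x
    refine (hker_pr _).1 ?_
    show pr (s₁ (f x)) = 0
    rw [hs₁, hfg.apply_apply_eq_zero]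
  let eY : ↥J ≃ₗ[R] LinearMap.range ιY := LinearEquiv.ofInjective ιY hι_inj
  have heY : ∀ w : LinearMap.range ιY, ιY (eY.symm w) = w.1 := by
    intro w
    have := eY.apply_symm_apply w
    calc ιY (eY.symm w) = (eY (eY.symm w)).1 := rfl
      _ = w.1 := by rw [this]
  let v : ↥X →ₗ[R] ↥J :=
    (eY.symm : LinearMap.range ιY →ₗ[R] ↥J) ∘ₗ
      LinearMap.codRestrict _ (s₁ ∘ₗ f) hrange
  have hv : ∀ x, ιY (v x) = s₁ (f x) := fun x => heY _
  obtain ⟨h, hh⟩ := hfact v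
  let s₂ : ↥F →ₗ[R] Yq := s₁ - ιY ∘ₗ h
  have hs₂pr : ∀ u, pr (s₂ u) = g u := by
    intro u
    show pr (s₁ u - ιY (h u)) = g u
    rw [map_sub, hs₁, hpr_ι, sub_zero]
  have hs₂f : ∀ x, s₂ (f x) = 0 := by
    intro x
    show s₁ (f x) - ιY (h (f x)) = 0
    have : h (f x) = v x := LinearMap.congr_fun hh x
    rw [this, hv, sub_self]
  have hs₂ker : ∀ u, g u = 0 → s₂ u = 0 := by
    intro u hu
    obtain ⟨x, rfl⟩ := (hfg u).1 hu
    exact hs₂f x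
  -- lift `π0` through `g`
  haveI : Module.Projective R (P.complex.X 0) :=
    (IsProjective.iff_projective _).2 (P.projective 0)
  obtain ⟨α, hα⟩ := Module.projective_lifting_property g π0 hg
  have hαx : ∀ x, g (α x) = π0 x := fun x => by simpa using LinearMap.congr_fun hα x
  let D : ↥(P.complex.X 0) →ₗ[R] Yq :=
    mk ∘ₗ LinearMap.inl R _ _ - s₂ ∘ₗ α
  have hD : ∀ x, D x ∈ LinearMap.range ιY := by
    intro x
    refine (hker_pr _).1 ?_
    show pr (mk (x, 0) - s₂ (α x)) = 0
    rw [map_sub, hpr_mk, hs₂pr, hαx x]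
    show π0 x - π0 x = 0
    rw [sub_self]
  let Ψ : ↥(P.complex.X 0) →ₗ[R] ↥J :=
    (eY.symm : LinearMap.range ιY →ₗ[R] ↥J) ∘ₗ LinearMap.codRestrict _ D hD
  have hΨ : ∀ x, ιY (Ψ x) = D x := fun x => heY _
  refine ⟨ModuleCat.ofHom Ψ, ?_⟩
  ext x
  show Ψ (P.complex.d 1 0 x) = φ x
  have hαker : g (α (P.complex.d 1 0 x)) = 0 := by
    rw [hαx (P.complex.d 1 0 x)]
    exact hd x
  have hs₂α : s₂ (α (P.complex.d 1 0 x)) = 0 := hs₂ker _ hαker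
  have hDval : D (P.complex.d 1 0 x) = mk (P.complex.d 1 0 x, 0) := by
    show mk (P.complex.d 1 0 x, 0) - s₂ (α (P.complex.d 1 0 x)) = mk (P.complex.d 1 0 x, 0)
    rw [hs₂α, sub_zero]
  have hmkι : mk (P.complex.d 1 0 x, 0) = ιY (ψ₀ (d10' x)) := by
    show mk (P.complex.d 1 0 x, 0) = mk (0, ψ₀ (d10' x))
    refine (Submodule.Quotient.eq W).2 ?_
    refine ⟨d10' x, ?_⟩
    have hk : (K.subtype.prod (-ψ₀)) (d10' x) = (P.complex.d 1 0 x, -ψ₀ (d10' x)) := rfl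
    rw [hk, Prod.ext_iff]
    constructor
    · show P.complex.d 1 0 x = ((P.complex.d 1 0 x, (0 : ↥J)) - (0, ψ₀ (d10' x))).1
      rw [Prod.fst_sub]
      show P.complex.d 1 0 x = P.complex.d 1 0 x - 0
      rw [sub_zero]
    · show -ψ₀ (d10' x) = ((P.complex.d 1 0 x, (0 : ↥J)) - (0, ψ₀ (d10' x))).2
      rw [Prod.snd_sub]
      show -ψ₀ (d10' x) = 0 - ψ₀ (d10' x)
      rw [zero_sub]
  have : ιY (Ψ (P.complex.d 1 0 x)) = ιY (ψ₀ (d10' x)) := by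
    rw [hΨ, hDval, hmkι]
  have hfin : Ψ (P.complex.d 1 0 x) = ψ₀ (d10' x) := hι_inj this
  rw [hfin]
  exact LinearMap.congr_fun hψ₀ x

end Stmt7Aux

end

/-- if `M` is the cokernel of a `WI^n_k(R)`-preenvelope `X → F` with `F`
flat, then `Tor_1(A, M) = 0` for every right module `A` of `n`-weak flat dimension
at most `k`. -/
theorem stmt7 (R : Type u) [Ring R] (n k : ℕ) (X F M : ModuleCat.{u} R)
    (hF : IsFlatModule R F) (f : X →ₗ[R] F)
    (henv : IsPreenvelope R (nwidLE R n k) X F f)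
    (g : F →ₗ[R] M) (hg : Function.Surjective g) (hfg : Function.Exact f g) :
    ∀ A : ModuleCat.{u} Rᵐᵒᵖ, nwfdLE R n k A → torVanish R 1 A M := by
  intro A hA
  exact Stmt7Aux.main_chase X F M (charLeft R A) (hF A) f
    (fun v => henv.2 (charLeft R A) hA v) g hg hfg
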